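/- If a finite simple graph G admits a fall colouring, then χ(G) ≤ χ_f(G) ≤ φ_f(G) ≤ δ(G)+1, where δ(G) is the minimum degree of G. -/

import Mathlib

open SimpleGraph

/-- A proper colouring of `G` given as a function to `ℕ`. -/
def IsProperColoring {V : Type*} (G : SimpleGraph V) (c : V → ℕ) : Prop :=
  ∀ u v, G.Adj u v → c u ≠ c v

/-- A vertex `v` is b-chromatic under `c`: it has a neighbour of every used colour
other than its own. -/
def IsBVertex {V : Type*} (G : SimpleGraph V) (c : V → ℕ) (v : V) : Prop :=
  ∀ j ∈ Set.range c, j ≠ c v → ∃ u, G.Adj v u ∧ c u = j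

/-- A b-colouring: a proper colouring in which every colour class contains a
b-chromatic vertex. -/
def IsBColoring {V : Type*} (G : SimpleGraph V) (c : V → ℕ) : Prop :=
  IsProperColoring G c ∧ ∀ j ∈ Set.range c, ∃ v, c v = j ∧ IsBVertex G c v

/-- The number of colours used by a colouring. -/
noncomputable def numColors {V : Type*} (c : V → ℕ) : ℕ := (Set.range c).ncard

/-- The b-chromatic number: the maximum number of colours in a b-colouring. -/
noncomputable def bChromaticNumber {V : Type*} (G : SimpleGraph V) : ℕ :=
  sSup {k | ∃ c, IsBColoring G c ∧ numColors c = k}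

/-- The m-degree `m(G)`: the largest `k` such that `G` has at least `k` vertices of
degree at least `k - 1`. -/
noncomputable def mDegree {V : Type*} (G : SimpleGraph V) : ℕ :=
  sSup {k | k ≤ {v : V | k ≤ (G.neighborSet v).ncard + 1}.ncard}

/-- The set of dense vertices: those of degree at least `m(G) - 1`. -/
def denseSet {V : Type*} (G : SimpleGraph V) : Set V :=
  {v | mDegree G ≤ (G.neighborSet v).ncard + 1}

/-- A graph is tight if it has exactly `m(G)` dense vertices, each of degree
exactly `m(G) - 1`. -/
def IsTight {V : Type*} (G : SimpleGraph V) : Prop :=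
  (denseSet G).ncard = mDegree G ∧
    ∀ v ∈ denseSet G, (G.neighborSet v).ncard = mDegree G - 1

/-- A fall colouring: a proper colouring in which every vertex has a neighbour of
every used colour other than its own. -/
def IsFallColoring {V : Type*} (G : SimpleGraph V) (c : V → ℕ) : Prop :=
  IsProperColoring G c ∧ ∀ v, ∀ j ∈ Set.range c, j ≠ c v → ∃ u, G.Adj v u ∧ c u = j

/-- The fall spectrum: the set of numbers of colours of fall colourings of `G`. -/
def fallSpectrum {V : Type*} (G : SimpleGraph V) : Set ℕ :=
  {k | ∃ c, IsFallColoring G c ∧ numColors c = k}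

/-- The outer boundary of a vertex set: vertices outside it with a neighbour in it. -/
def outerBoundary {V : Type*} (G : SimpleGraph V) (T : Set V) : Set V :=
  {s | s ∉ T ∧ ∃ t ∈ T, G.Adj s t}

theorem stmt2 {V : Type*} [Fintype V] [Nonempty V] (G : SimpleGraph V)
    (h : (fallSpectrum G).Nonempty) :
    G.chromaticNumber ≤ ((sInf (fallSpectrum G) : ℕ) : ℕ∞) ∧
    sInf (fallSpectrum G) ≤ sSup (fallSpectrum G) ∧
    sSup (fallSpectrum G) ≤ sInf {k | ∃ v : V, (G.neighborSet v).ncard = k} + 1 := by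

  classical
  have key : ∀ k ∈ fallSpectrum G, ∀ v : V, k ≤ (G.neighborSet v).ncard + 1 := by
    rintro k ⟨c, ⟨hp, hf⟩, hnc⟩ v
    have hfinN : (G.neighborSet v).Finite := Set.toFinite _
    have hfinR : (Set.range c).Finite := Set.finite_range c
    -- injection from (range c \ {c v}) into neighborSet v
    have hle : (Set.range c \ {c v}).ncard ≤ (G.neighborSet v).ncard := by
      have hch : ∀ j ∈ Set.range c \ {c v}, ∃ u, G.Adj v u ∧ c u = j := by
        rintro j ⟨hj, hj2⟩
        exact hf v j hj (by simpa using hj2)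
      choose f hfadj hfc using hch
      apply Set.ncard_le_ncard_of_injOn (fun j => if hj : j ∈ Set.range c \ {c v} then f j hj else v)
      · intro j hj
        simp only [dif_pos hj]
        exact hfadj j hj
      · intro a ha b hb hab
        simp only [dif_pos ha, dif_pos hb] at hab
        rw [← hfc a ha, ← hfc b hb, hab]
    have hmem : c v ∈ Set.range c := Set.mem_range_self v
    have hd : (Set.range c \ {c v}).ncard = (Set.range c).ncard - 1 :=
      Set.ncard_diff_singleton_of_mem hmem
    have hpos : 1 ≤ (Set.range c).ncard := (Set.ncard_pos hfinR).2 ⟨_, hmem⟩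
    have : k = (Set.range c).ncard := hnc.symm
    omega
  have hbdd : BddAbove (fallSpectrum G) := by
    obtain ⟨v⟩ := (inferInstance : Nonempty V)
    exact ⟨(G.neighborSet v).ncard + 1, fun k hk => key k hk v⟩
  refine ⟨?_, csInf_le_csSup h (OrderBot.bddBelow _) hbdd, ?_⟩
  · obtain ⟨c, ⟨hp, hf⟩, hnc⟩ := Nat.sInf_mem h
    haveI : Fintype (Set.range c) := Set.fintypeRange c
    have hcard : numColors c = Fintype.card (Set.range c) := by
      rw [numColors, Set.ncard_eq_toFinset_card', Set.toFinset_card]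
    have hcol : G.Colorable (numColors c) := by
      rw [hcard]
      let e := Fintype.equivFin (Set.range c)
      refine ⟨SimpleGraph.Coloring.mk (fun v => e ⟨c v, Set.mem_range_self v⟩) ?_⟩
      intro u w huw heq
      exact hp u w huw (by simpa using congrArg Subtype.val (e.injective heq))
    rw [← hnc]
    exact hcol.chromaticNumber_le
  · have hne : {k | ∃ v : V, (G.neighborSet v).ncard = k}.Nonempty := by
      obtain ⟨v⟩ := (inferInstance : Nonempty V)
      exact ⟨_, v, rfl⟩
    obtain ⟨v0, hv0⟩ := Nat.sInf_mem hne
    apply csSup_le h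
    intro k hk
    calc k ≤ (G.neighborSet v0).ncard + 1 := key k hk v0
      _ = _ := by rw [hv0]
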